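/- A set X ⊆ κ^ω is U-measurable if and only if there exist sets Z, Y with Z ⊆ X ⊆ Y, Z an F_σ set, Y a G_δ set, and Y \ Z U-null. -/

import Mathlib

universe u

namespace UMeas

variable {A : Type u}

/-- The first `n` values of an infinite sequence, as a list. -/
def seg (s : ℕ → A) (n : ℕ) : List A := List.ofFn (fun i : Fin n => s i)

/-- `T` is a `U`-branching tree: a set of finite sequences closed under initial
segments, containing the empty sequence, whose branching sets are in `U`. -/
def IsUTree (U : Ultrafilter A) (T : Set (List A)) : Prop :=
  ([] ∈ T) ∧ (∀ σ ∈ T, ∀ τ : List A, τ <+: σ → τ ∈ T) ∧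
    ∀ σ ∈ T, {a : A | σ ++ [a] ∈ T} ∈ U

/-- The set of infinite branches through `T`. -/
def branches (T : Set (List A)) : Set (ℕ → A) := {s | ∀ n, seg s n ∈ T}

/-- Concatenation `σ⌢s` of a finite sequence with an infinite sequence. -/
def app (σ : List A) (s : ℕ → A) : ℕ → A :=
  fun n => if h : n < σ.length then σ.get ⟨n, h⟩ else s (n - σ.length)

/-- The section `X↾σ = {s | σ⌢s ∈ X}`. -/
def sect (X : Set (ℕ → A)) (σ : List A) : Set (ℕ → A) := {s | app σ s ∈ X}

def ULarge (U : Ultrafilter A) (X : Set (ℕ → A)) : Prop :=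
  ∃ T, IsUTree U T ∧ branches T ⊆ X

def USmall (U : Ultrafilter A) (X : Set (ℕ → A)) : Prop :=
  ∃ T, IsUTree U T ∧ branches T ∩ X = ∅

def UDetermined (U : Ultrafilter A) (X : Set (ℕ → A)) : Prop :=
  ULarge U X ∨ USmall U X

def UNull (U : Ultrafilter A) (X : Set (ℕ → A)) : Prop :=
  ∀ σ : List A, USmall U (sect X σ)

def UMeasurable (U : Ultrafilter A) (X : Set (ℕ → A)) : Prop :=
  ∀ σ : List A, UDetermined U (sect X σ)

def shift (k : ℕ) (s : ℕ → A) : ℕ → A := fun n => s (n + k)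

theorem seg_length (s : ℕ → A) (n : ℕ) : (seg s n).length = n := List.length_ofFn

theorem seg_zero (s : ℕ → A) : seg s 0 = [] := rfl

theorem seg_succ' (s : ℕ → A) (n : ℕ) : seg s (n + 1) = seg s n ++ [s n] := by
  rw [seg, List.ofFn_succ', List.concat_eq_append]
  simp [seg]

theorem seg_succ_cons (s : ℕ → A) (n : ℕ) :
    seg s (n + 1) = s 0 :: seg (shift 1 s) n := by
  simp [seg, List.ofFn_succ, shift]

theorem seg_one (s : ℕ → A) : seg s 1 = [s 0] := by
  simpa [seg_zero] using seg_succ_cons s 0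

theorem seg_add (s : ℕ → A) (n m : ℕ) :
    seg s (n + m) = seg s n ++ seg (shift n s) m := by
  induction m with
  | zero => simp [seg_zero]
  | succ m ih =>
      have : n + (m + 1) = (n + m) + 1 := by omega
      rw [this, seg_succ', ih, seg_succ', List.append_assoc]
      simp [shift, Nat.add_comm]

theorem seg_take (s : ℕ → A) (n m : ℕ) : (seg s (n + m)).take n = seg s n := by
  rw [seg_add]; exact List.take_left' (seg_length s n)

theorem seg_drop (s : ℕ → A) (n m : ℕ) :
    (seg s (n + m)).drop n = seg (shift n s) m := by
  rw [seg_add]; exact List.drop_left' (seg_length s n)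

theorem app_apply_lt (σ : List A) (s : ℕ → A) {n : ℕ} (h : n < σ.length) :
    app σ s n = σ.get ⟨n, h⟩ := dif_pos h

theorem app_apply_ge (σ : List A) (s : ℕ → A) {n : ℕ} (h : σ.length ≤ n) :
    app σ s n = s (n - σ.length) := dif_neg (by omega)

theorem app_nil (s : ℕ → A) : app ([] : List A) s = s := by
  funext n; simp [app]

theorem seg_app (σ : List A) (s : ℕ → A) (m : ℕ) :
    seg (app σ s) (σ.length + m) = σ ++ seg s m := by
  apply List.ext_getElem
  · simp [seg_length]
  · intro i h1 h2
    simp only [seg, List.getElem_ofFn]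
    rcases lt_or_ge i σ.length with h | h
    · rw [List.getElem_append_left h]
      exact app_apply_lt σ s h
    · rw [List.getElem_append_right h]
      rw [app_apply_ge σ s h]
      simp [seg, List.getElem_ofFn]

theorem seg_app_len (σ : List A) (s : ℕ → A) : seg (app σ s) σ.length = σ := by
  simpa [seg_zero] using seg_app σ s 0

theorem shift_app (σ : List A) (s : ℕ → A) : shift σ.length (app σ s) = s := by
  funext n
  simp [shift, app_apply_ge σ s (by omega : σ.length ≤ n + σ.length)]

theorem app_seg_shift (s : ℕ → A) (n : ℕ) : app (seg s n) (shift n s) = s := by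
  funext m
  rcases lt_or_ge m n with h | h
  · rw [app_apply_lt _ _ (by simpa [seg_length] using h)]
    simp [seg, List.get_ofFn]
  · rw [app_apply_ge _ _ (by simpa [seg_length] using h)]
    simp only [seg_length, shift]
    congr 1; omega

theorem app_concat_shift (σ : List A) (s : ℕ → A) :
    app (σ ++ [s 0]) (shift 1 s) = app σ s := by
  funext n
  rcases lt_or_ge n σ.length with h | h
  · rw [app_apply_lt _ _ (h := by simp; omega), app_apply_lt _ _ h]
    simp [List.getElem_append_left h]
  · rcases eq_or_lt_of_le h with h' | h'
    · rw [app_apply_lt _ _ (h := by simp; omega), app_apply_ge _ _ h]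
      subst h'
      simp
    · rw [app_apply_ge _ _ (h := by simp; omega), app_apply_ge _ _ h]
      simp only [List.length_append, List.length_cons, List.length_nil, shift]
      congr 1; omega

theorem apply_eq_of_seg_eq {t s : ℕ → A} {n : ℕ} (h : seg t n = seg s n)
    {i : ℕ} (hi : i < n) : t i = s i := by
  have h1 : i < (seg t n).length := by simpa [seg_length] using hi
  have := List.getElem_of_eq h h1
  simpa [seg, List.getElem_ofFn] using this

section Topo
set_option linter.unusedSectionVars false

variable [TopologicalSpace A] [DiscreteTopology A]

theorem continuous_app (σ : List A) : Continuous (fun s : ℕ → A => app σ s) := by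
  apply continuous_pi
  intro n
  by_cases h : n < σ.length
  · simp only [app, dif_pos h]; exact continuous_const
  · simp only [app, dif_neg h]; exact continuous_apply _

theorem isClosed_branches (T : Set (List A)) : IsClosed (branches T) := by
  rw [← isOpen_compl_iff, isOpen_iff_forall_mem_open]
  intro s hs
  simp only [Set.mem_compl_iff, branches, Set.mem_setOf_eq, not_forall] at hs
  obtain ⟨n, hn⟩ := hs
  refine ⟨{t | ∀ i, i < n → t i = s i}, ?_, ?_, fun i _ => rfl⟩
  · intro t ht hb
    apply hn
    have : seg t n = seg s n := by
      apply List.ext_getElem (by simp [seg_length])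
      intro i h1 h2
      simp only [seg, List.getElem_ofFn]
      exact ht i (by simpa [seg_length] using h1)
    rw [← this]; exact hb n
  · have : {t : ℕ → A | ∀ i, i < n → t i = s i} = ⋂ i : Fin n, (fun t : ℕ → A => t i) ⁻¹' {s i} := by
      ext t; simp [Fin.forall_iff]
    rw [this]
    exact isOpen_iInter_of_finite fun i => (continuous_apply _).isOpen_preimage _ (isOpen_discrete _)

theorem isOpen_cyl (n : ℕ) (σ : List A) : IsOpen {t : ℕ → A | seg t n = σ} := by
  by_cases h : ∃ s : ℕ → A, seg s n = σ
  · obtain ⟨s, rfl⟩ := h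
    have : {t : ℕ → A | seg t n = seg s n} = ⋂ i : Fin n, (fun t : ℕ → A => t i) ⁻¹' {s i} := by
      ext t
      constructor
      · intro ht
        simp only [Set.mem_iInter, Set.mem_preimage, Set.mem_singleton_iff]
        intro i
        exact apply_eq_of_seg_eq ht i.2
      · intro ht
        simp only [Set.mem_iInter, Set.mem_preimage, Set.mem_singleton_iff] at ht
        apply List.ext_getElem (by simp [seg_length])
        intro i h1 h2
        simp only [seg, List.getElem_ofFn]
        exact ht ⟨i, by simpa [seg_length] using h1⟩
    rw [this]
    exact isOpen_iInter_of_finite fun i => (continuous_apply _).isOpen_preimage _ (isOpen_discrete _)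
  · have : {t : ℕ → A | seg t n = σ} = ∅ := by
      ext t; simp only [Set.mem_setOf_eq, Set.mem_empty_iff_false, iff_false]
      intro ht; exact h ⟨t, ht⟩
    rw [this]; exact isOpen_empty

theorem exists_cyl_subset {W : Set (ℕ → A)} (hW : IsOpen W) {s : ℕ → A} (hs : s ∈ W) :
    ∃ n, ∀ t, seg t n = seg s n → t ∈ W := by
  obtain ⟨I, u, hu, hsub⟩ := isOpen_pi_iff.mp hW s hs
  obtain ⟨n, hn⟩ : ∃ n, ∀ i ∈ I, i < n := ⟨(I.sup id) + 1, fun i hi => by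
    have := Finset.le_sup (f := id) hi; simp only [id] at this; omega⟩
  refine ⟨n, fun t ht => hsub ?_⟩
  intro i hi
  rw [apply_eq_of_seg_eq ht (hn i hi)]
  exact (hu i hi).2

theorem sect_isClosed {F : Set (ℕ → A)} (hF : IsClosed F) (σ : List A) :
    IsClosed (sect F σ) := hF.preimage (continuous_app σ)

theorem sect_isOpen {F : Set (ℕ → A)} (hF : IsOpen F) (σ : List A) :
    IsOpen (sect F σ) := hF.preimage (continuous_app σ)

end Topo

-- tree lemmas

def loc (T : Set (List A)) (σ : List A) : Set (List A) := {τ | σ ++ τ ∈ T}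

theorem isUTree_loc {U : Ultrafilter A} {T : Set (List A)} (hT : IsUTree U T)
    {σ : List A} (hσ : σ ∈ T) : IsUTree U (loc T σ) := by
  refine ⟨by simpa [loc] using hσ, ?_, ?_⟩
  · intro τ hτ ρ hρ
    obtain ⟨r, rfl⟩ := hρ
    exact hT.2.1 _ hτ _ ⟨r, by simp [List.append_assoc]⟩
  · intro τ hτ
    have := hT.2.2 _ hτ
    simpa [loc, List.append_assoc] using this

theorem branches_mono {T T' : Set (List A)} (h : T ⊆ T') : branches T ⊆ branches T' :=
  fun _ hs n => h (hs n)


section Det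

variable {U : Ultrafilter A} {T B W : Set _}

/-- Impredicative least fixed point: nodes of `T` from which one can shrink into `B`. -/
def Dec (U : Ultrafilter A) (T B : Set (List A)) : Set (List A) :=
  {σ | ∀ P : Set (List A), (∀ τ ∈ T, τ ∈ B → τ ∈ P) →
      (∀ τ ∈ T, {a | τ ++ [a] ∈ P} ∈ U → τ ∈ P) → σ ∈ P}

theorem dec_base {σ : List A} (h1 : σ ∈ T) (h2 : σ ∈ B) : σ ∈ Dec U T B :=
  fun _ hb _ => hb _ h1 h2

theorem dec_step {σ : List A} (h1 : σ ∈ T) (hU : {a | σ ++ [a] ∈ Dec U T B} ∈ U) :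
    σ ∈ Dec U T B := fun P hb hs =>
  hs _ h1 (Filter.mem_of_superset hU (fun _ ha => ha P hb hs))

theorem dec_large {W : Set (ℕ → A)} (hT : IsUTree U T)
    (hBW : ∀ σ ∈ B, ∀ s, app σ s ∈ W) :
    ∀ σ ∈ Dec U T B, ∃ T', IsUTree U T' ∧ T' ⊆ loc T σ ∧
      ∀ s ∈ branches T', app σ s ∈ W := by
  intro σ hσ
  refine hσ {σ | ∃ T', IsUTree U T' ∧ T' ⊆ loc T σ ∧ ∀ s ∈ branches T', app σ s ∈ W} ?_ ?_
  · -- base case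
    intro τ hτ hτB
    exact ⟨loc T τ, isUTree_loc hT hτ, le_refl _, fun s _ => hBW _ hτB s⟩
  · -- step case
    intro τ hτ hU
    set S := {a | ∃ T', IsUTree U T' ∧ T' ⊆ loc T (τ ++ [a]) ∧
      ∀ s ∈ branches T', app (τ ++ [a]) s ∈ W} with hS
    have hSU : S ∈ U := hU
    have hex : ∀ a, ∃ T', a ∈ S → (IsUTree U T' ∧ T' ⊆ loc T (τ ++ [a]) ∧
        ∀ s ∈ branches T', app (τ ++ [a]) s ∈ W) := by
      intro a
      by_cases h : a ∈ S
      · obtain ⟨T', hT'⟩ := h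
        exact ⟨T', fun _ => hT'⟩
      · exact ⟨∅, fun hc => absurd hc h⟩
    choose G hG using hex
    refine ⟨{l | l = [] ∨ ∃ a τ', l = a :: τ' ∧ a ∈ S ∧ τ' ∈ G a}, ⟨?_, ?_, ?_⟩, ?_, ?_⟩
    · exact Or.inl rfl
    · -- prefix closed
      rintro l (rfl | ⟨a, τ', rfl, haS, hτ'⟩) ρ hρ
      · left; exact List.prefix_nil.mp hρ
      · rcases ρ with _ | ⟨b, ρ'⟩
        · exact Or.inl rfl
        · obtain ⟨rfl, hρ'⟩ := List.cons_prefix_cons.mp hρ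
          exact Or.inr ⟨b, ρ', rfl, haS, (hG b haS).1.2.1 _ hτ' _ hρ'⟩
    · -- branching
      rintro l (rfl | ⟨a, τ', rfl, haS, hτ'⟩)
      · refine Filter.mem_of_superset hSU ?_
        intro a ha
        exact Or.inr ⟨a, [], rfl, ha, (hG a ha).1.1⟩
      · refine Filter.mem_of_superset ((hG a haS).1.2.2 _ hτ') ?_
        intro b hb
        exact Or.inr ⟨a, τ' ++ [b], rfl, haS, hb⟩
    · -- subset of loc T τ
      rintro l (rfl | ⟨a, τ', rfl, haS, hτ'⟩)
      · simpa [loc] using hτ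
      · have := (hG a haS).2.1 hτ'
        simpa [loc, List.append_assoc] using this
    · -- branches into W
      intro s hs
      have h1 := hs 1
      rw [seg_one] at h1
      rcases h1 with h1 | ⟨a, τ', he, haS, _⟩
      · exact absurd h1 (by simp)
      obtain ⟨ha, hτ'⟩ := List.cons_eq_cons.mp he
      subst ha
      have hbr : shift 1 s ∈ branches (G (s 0)) := by
        intro n
        have hn := hs (n + 1)
        rw [seg_succ_cons] at hn
        rcases hn with hn | ⟨b, ρ', he', _, hmem⟩
        · exact absurd hn (by simp)
        obtain ⟨hb, hρ'⟩ := List.cons_eq_cons.mp he'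
        rw [hb, hρ']; exact hmem
      have := (hG (s 0) haS).2.2 _ hbr
      rwa [app_concat_shift] at this

theorem dec_small (hT : IsUTree U T) (hroot : [] ∉ Dec U T B) :
    ∃ T', IsUTree U T' ∧ T' ⊆ T ∧ ∀ s ∈ branches T', ∀ n, seg s n ∉ B := by
  refine ⟨{τ | τ ∈ T ∧ ∀ ρ, ρ <+: τ → ρ ∉ Dec U T B}, ⟨?_, ?_, ?_⟩, fun l h => h.1, ?_⟩
  · exact ⟨hT.1, fun ρ hρ => (List.prefix_nil.mp hρ) ▸ hroot⟩
  · rintro τ ⟨hτT, hτD⟩ ρ hρ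
    exact ⟨hT.2.1 _ hτT _ hρ, fun ρ' hρ' => hτD _ (hρ'.trans hρ)⟩
  · rintro τ ⟨hτT, hτD⟩
    have h1 : {a | τ ++ [a] ∈ T} ∈ U := hT.2.2 _ hτT
    have h2 : ¬ ({a | τ ++ [a] ∈ Dec U T B} ∈ U) := by
      intro h
      exact hτD τ (List.prefix_refl τ) (dec_step hτT h)
    have h3 : {a | τ ++ [a] ∈ Dec U T B}ᶜ ∈ U := (Ultrafilter.compl_mem_iff_notMem).mpr h2
    refine Filter.mem_of_superset (Filter.inter_mem h1 h3) ?_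
    rintro a ⟨haT, haD⟩
    refine ⟨haT, fun ρ hρ => ?_⟩
    rcases List.prefix_concat_iff.mp hρ with rfl | hρ'
    · exact haD
    · exact hτD _ hρ'
  · intro s hs n hB
    exact (hs n).2 _ (List.prefix_refl _) (dec_base (hs n).1 hB)

variable [TopologicalSpace A] [DiscreteTopology A]

theorem open_det (hT : IsUTree U T) {W : Set (ℕ → A)} (hW : IsOpen W) :
    ∃ T', IsUTree U T' ∧ T' ⊆ T ∧ (branches T' ⊆ W ∨ branches T' ∩ W = ∅) := by
  classical
  set B : Set (List A) := {σ | ∀ s, app σ s ∈ W} with hB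
  by_cases h : [] ∈ Dec U T B
  · obtain ⟨T', h1, h2, h3⟩ := dec_large (B := B) hT (fun σ hσ s => hσ s) [] h
    refine ⟨T', h1, ?_, Or.inl fun s hs => by simpa [app_nil] using h3 s hs⟩
    intro τ hτ
    simpa [loc] using h2 hτ
  · obtain ⟨T', h1, h2, h3⟩ := dec_small hT h
    refine ⟨T', h1, h2, Or.inr ?_⟩
    rw [Set.eq_empty_iff_forall_notMem]
    rintro s ⟨hsT, hsW⟩
    obtain ⟨n, hn⟩ := exists_cyl_subset hW hsW
    refine h3 s hsT n ?_
    intro u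
    apply hn
    have := seg_app_len (seg s n) u
    rwa [seg_length] at this
  
theorem closed_det (hT : IsUTree U T) {F : Set (ℕ → A)} (hF : IsClosed F) :
    ∃ T', IsUTree U T' ∧ T' ⊆ T ∧ (branches T' ⊆ F ∨ branches T' ∩ F = ∅) := by
  obtain ⟨T', h1, h2, h3⟩ := open_det hT hF.isOpen_compl
  refine ⟨T', h1, h2, ?_⟩
  rcases h3 with h3 | h3
  · right
    rw [Set.eq_empty_iff_forall_notMem]
    rintro s ⟨hs1, hs2⟩
    exact h3 hs1 hs2
  · left
    intro s hs
    by_contra hc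
    rw [Set.eq_empty_iff_forall_notMem] at h3
    exact h3 s ⟨hs, hc⟩


theorem level_shrink (hT : IsUTree U T) {F : Set (ℕ → A)} (hF : IsClosed F) (n : ℕ) :
    ∃ T', IsUTree U T' ∧ T' ⊆ T ∧ (∀ τ : List A, τ.length < n → (τ ∈ T' ↔ τ ∈ T)) ∧
      ∀ s t, s ∈ branches T' → t ∈ branches T' → seg s n = seg t n →
        (s ∈ F ↔ t ∈ F) := by
  classical
  have hex : ∀ σ : List A, ∃ S, (σ ∈ T ∧ σ.length = n) → (IsUTree U S ∧ S ⊆ loc T σ ∧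
      (branches S ⊆ sect F σ ∨ branches S ∩ sect F σ = ∅)) := by
    intro σ
    by_cases h : σ ∈ T ∧ σ.length = n
    · obtain ⟨S, h1, h2, h3⟩ := closed_det (isUTree_loc hT h.1) (sect_isClosed hF σ)
      exact ⟨S, fun _ => ⟨h1, h2, h3⟩⟩
    · exact ⟨∅, fun hc => absurd hc h⟩
  choose G hG using hex
  refine ⟨{τ | τ ∈ T ∧ (n ≤ τ.length → τ.drop n ∈ G (τ.take n))}, ⟨?_, ?_, ?_⟩,
    fun τ h => h.1, ?_, ?_⟩
  · -- empty sequence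
    refine ⟨hT.1, fun h0 => ?_⟩
    have hn0 : n = 0 := by simpa using h0
    subst hn0
    simpa using (hG [] ⟨hT.1, rfl⟩).1.1
  · -- prefix closed
    rintro τ ⟨hτT, hτG⟩ ρ hρ
    refine ⟨hT.2.1 _ hτT _ hρ, fun hnρ => ?_⟩
    have hnτ : n ≤ τ.length := le_trans hnρ hρ.length_le
    have htake : ρ.take n = τ.take n := by
      obtain ⟨r, rfl⟩ := hρ
      rw [List.take_append, Nat.sub_eq_zero_of_le hnρ]
      simp
    have hdrop : ρ.drop n <+: τ.drop n := by
      obtain ⟨r, rfl⟩ := hρ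
      rw [List.drop_append, Nat.sub_eq_zero_of_le hnρ]
      exact ⟨r, by simp⟩
    have hτtake : τ.take n ∈ T ∧ (τ.take n).length = n :=
      ⟨hT.2.1 _ hτT _ (List.take_prefix n τ), by simp [List.length_take]; omega⟩
    rw [htake]
    exact (hG _ hτtake).1.2.1 _ (hτG hnτ) _ hdrop
  · -- branching
    rintro τ ⟨hτT, hτG⟩
    rcases lt_or_ge τ.length n with h | h
    · refine Filter.mem_of_superset (hT.2.2 _ hτT) ?_
      intro a ha
      refine ⟨ha, fun hle => ?_⟩
      have hlen : (τ ++ [a]).length = n := by simp at hle ⊢; omega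
      have h1 : (τ ++ [a]).drop n = [] := List.drop_eq_nil_of_le (by omega)
      have h2 : (τ ++ [a]).take n = τ ++ [a] := List.take_of_length_le (by omega)
      rw [h1, h2]
      exact (hG _ ⟨ha, hlen⟩).1.1
    · have hτtake : τ.take n ∈ T ∧ (τ.take n).length = n :=
        ⟨hT.2.1 _ hτT _ (List.take_prefix n τ), by simp [List.length_take]; omega⟩
      have hdropG := hτG h
      refine Filter.mem_of_superset ((hG _ hτtake).1.2.2 _ hdropG) ?_
      intro a ha
      have hTa : τ ++ [a] ∈ T := by
        have := (hG _ hτtake).2.1 ha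
        simp only [loc, Set.mem_setOf_eq] at this
        rwa [← List.append_assoc, List.take_append_drop] at this
      refine ⟨hTa, fun _ => ?_⟩
      have h1 : (τ ++ [a]).take n = τ.take n := by
        rw [List.take_append, Nat.sub_eq_zero_of_le h]
        simp
      have h2 : (τ ++ [a]).drop n = τ.drop n ++ [a] := by
        rw [List.drop_append, Nat.sub_eq_zero_of_le h]
        simp
      rw [h1, h2]
      exact ha
  · -- agreement below level n
    intro τ hτ
    constructor
    · exact fun h => h.1
    · exact fun h => ⟨h, fun hc => by omega⟩
  · -- decidedness
    intro s t hs ht hseg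
    have hkey : ∀ u : ℕ → A, (∀ m, seg u m ∈ {τ | τ ∈ T ∧ (n ≤ τ.length → τ.drop n ∈ G (τ.take n))}) →
        shift n u ∈ branches (G (seg u n)) := by
      intro u hu m
      have h1 := (hu (n + m)).2 (by rw [seg_length]; omega)
      rwa [seg_take, seg_drop] at h1
    have hσ : seg s n ∈ T ∧ (seg s n).length = n := ⟨(hs n).1, seg_length s n⟩
    have hsb := hkey s hs
    have htb : shift n t ∈ branches (G (seg s n)) := by
      have := hkey t ht
      rwa [← hseg] at this
    have hsF : (s ∈ F ↔ shift n s ∈ sect F (seg s n)) := by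
      unfold sect
      rw [Set.mem_setOf_eq, app_seg_shift]
    have htF : (t ∈ F ↔ shift n t ∈ sect F (seg s n)) := by
      unfold sect
      rw [Set.mem_setOf_eq, hseg, app_seg_shift]
    rcases (hG _ hσ).2.2 with h | h
    · rw [hsF, htF]
      exact ⟨fun _ => h htb, fun _ => h hsb⟩
    · rw [Set.eq_empty_iff_forall_notMem] at h
      rw [hsF, htF]
      constructor
      · intro hc; exact absurd ⟨hsb, hc⟩ (h _)
      · intro hc; exact absurd ⟨htb, hc⟩ (h _)


theorem fsigma_det {T0 : Set (List A)} (hT : IsUTree U T0) (C : ℕ → Set (ℕ → A))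
    (hC : ∀ n, IsClosed (C n)) :
    ∃ T', IsUTree U T' ∧ T' ⊆ T0 ∧
      (branches T' ⊆ ⋃ n, C n ∨ branches T' ∩ (⋃ n, C n) = ∅) := by
  classical
  have key : ∀ n (T : Set (List A)), ∃ T', IsUTree U T →
      (IsUTree U T' ∧ T' ⊆ T ∧ (∀ τ : List A, τ.length < n → (τ ∈ T' ↔ τ ∈ T)) ∧
        ∀ s t, s ∈ branches T' → t ∈ branches T' → seg s n = seg t n →
          (s ∈ C n ↔ t ∈ C n)) := by
    intro n T
    by_cases h : IsUTree U T
    · obtain ⟨T', h1⟩ := level_shrink h (hC n) n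
      exact ⟨T', fun _ => h1⟩
    · exact ⟨∅, fun hc => absurd hc h⟩
  choose Gf hGf using key
  set Tr : ℕ → Set (List A) := fun n => Nat.rec T0 (fun n T => Gf n T) n with hTr
  have hTr0 : Tr 0 = T0 := rfl
  have hTrS : ∀ n, Tr (n + 1) = Gf n (Tr n) := fun n => rfl
  have htree : ∀ n, IsUTree U (Tr n) := by
    intro n
    induction n with
    | zero => exact hT
    | succ n ih => exact (hGf n (Tr n) ih).1
  have hsub : ∀ n, Tr (n + 1) ⊆ Tr n := fun n => (hGf n (Tr n) (htree n)).2.1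
  have hchain : ∀ m n, m ≤ n → Tr n ⊆ Tr m := by
    intro m n h
    induction n with
    | zero => have : m = 0 := by omega
              subst this; exact le_refl _
    | succ n ih =>
        rcases Nat.lt_or_ge m (n + 1) with h' | h'
        · exact le_trans (hsub n) (ih (by omega))
        · have : m = n + 1 := by omega
          subst this; exact le_refl _
  have hagree : ∀ k m, k ≤ m → ∀ τ : List A, τ.length < k → (τ ∈ Tr m ↔ τ ∈ Tr k) := by
    intro k m hkm
    induction m with
    | zero => have : k = 0 := by omega
              subst this; intro τ _; rfl
    | succ m ih =>
        rcases Nat.lt_or_ge k (m + 1) with h' | h'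
        · intro τ hτ
          have h1 := (hGf m (Tr m) (htree m)).2.2.1 τ (by omega)
          rw [hTrS]
          rw [h1]
          exact ih (by omega) τ hτ
        · have : k = m + 1 := by omega
          subst this
          intro τ _; rfl
  set Tω : Set (List A) := ⋂ n, Tr n with hTω
  have hTωsub : ∀ n, Tω ⊆ Tr n := fun n => Set.iInter_subset _ n
  have hTωmem : ∀ τ : List A, τ ∈ Tω ↔ ∀ n, τ ∈ Tr n := by
    intro τ; rw [hTω]; exact Set.mem_iInter
  have hTωtree : IsUTree U Tω := by
    refine ⟨?_, ?_, ?_⟩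
    · exact (hTωmem _).mpr fun n => (htree n).1
    · intro σ hσ τ hτ
      exact (hTωmem _).mpr fun n => (htree n).2.1 _ ((hTωmem _).mp hσ n) _ hτ
    · intro τ hτ
      have hk : τ ∈ Tr (τ.length + 2) := (hTωmem _).mp hτ (τ.length + 2)
      refine Filter.mem_of_superset ((htree (τ.length + 2)).2.2 τ hk) ?_
      intro a ha
      refine (hTωmem _).mpr fun m => ?_
      rcases le_or_gt m (τ.length + 2) with h | h
      · exact hchain m _ h ha
      · exact (hagree (τ.length + 2) m (by omega) _ (by simp)).mpr ha
  have hdecide : ∀ n, ∀ s t, s ∈ branches Tω → t ∈ branches Tω → seg s n = seg t n →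
      (s ∈ C n ↔ t ∈ C n) := by
    intro n s t hs ht hseg
    have h1 : s ∈ branches (Tr (n + 1)) := branches_mono (hTωsub (n + 1)) hs
    have h2 : t ∈ branches (Tr (n + 1)) := branches_mono (hTωsub (n + 1)) ht
    exact (hGf n (Tr n) (htree n)).2.2.2 s t h1 h2 hseg
  set V : Set (ℕ → A) :=
    ⋃ n, ⋃ s ∈ branches Tω ∩ C n, {t : ℕ → A | seg t n = seg s n} with hV
  have hVopen : IsOpen V := by
    refine isOpen_iUnion fun n => isOpen_iUnion fun s => isOpen_iUnion fun _ => ?_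
    exact isOpen_cyl n (seg s n)
  have hVeq : ∀ t ∈ branches Tω, (t ∈ V ↔ t ∈ ⋃ n, C n) := by
    intro t ht
    constructor
    · intro htV
      simp only [hV, Set.mem_iUnion, Set.mem_setOf_eq] at htV
      obtain ⟨n, s, ⟨hsb, hsC⟩, hseg⟩ := htV
      exact Set.mem_iUnion.mpr ⟨n, (hdecide n s t hsb ht hseg.symm).mp hsC⟩
    · intro htC
      obtain ⟨n, hn⟩ := Set.mem_iUnion.mp htC
      simp only [hV, Set.mem_iUnion, Set.mem_setOf_eq]
      exact ⟨n, t, ⟨ht, hn⟩, rfl⟩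
  obtain ⟨T', h1, h2, h3⟩ := open_det hTωtree hVopen
  refine ⟨T', h1, fun τ hτ => hTωsub 0 (h2 hτ), ?_⟩
  rcases h3 with h3 | h3
  · left
    intro s hs
    exact (hVeq s (branches_mono h2 hs)).mp (h3 hs)
  · right
    rw [Set.eq_empty_iff_forall_notMem] at h3 ⊢
    rintro s ⟨hs, hsC⟩
    exact h3 s ⟨hs, (hVeq s (branches_mono h2 hs)).mpr hsC⟩

end Det

theorem F_eq_branches (P : Set (List A)) (TT : List A → Set (List A)) (k : ℕ) :
    {s : ℕ → A | seg s k ∈ P ∧ shift k s ∈ branches (TT (seg s k))} =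
    branches {τ | τ.length < k ∨ (τ.take k ∈ P ∧ τ.drop k ∈ TT (τ.take k))} := by
  ext s
  constructor
  · rintro ⟨h1, h2⟩ n
    rcases lt_or_ge n k with h | h
    · left; rw [seg_length]; exact h
    · right
      obtain ⟨m, rfl⟩ : ∃ m, n = k + m := ⟨n - k, by omega⟩
      rw [seg_take, seg_drop]
      exact ⟨h1, h2 m⟩
  · intro h
    have htk : (seg s k).take k = seg s k := by
      simpa using seg_take s k 0
    have hk := h k
    rcases hk with hk | hk
    · rw [seg_length] at hk; omega
    rw [htk] at hk
    refine ⟨hk.1, fun m => ?_⟩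
    have hn := h (k + m)
    rcases hn with hn | hn
    · rw [seg_length] at hn; omega
    · rw [seg_take, seg_drop] at hn
      exact hn.2

section Main

variable [TopologicalSpace A] [DiscreteTopology A] (U : Ultrafilter A) (X : Set (ℕ → A))

theorem main_iff :
    UMeasurable U X ↔
      ∃ Z Y : Set (ℕ → A), Z ⊆ X ∧ X ⊆ Y ∧
        (∃ F : ℕ → Set (ℕ → A), (∀ n, IsClosed (F n)) ∧ Z = ⋃ n, F n) ∧
        IsGδ Y ∧ UNull U (Y \ Z) := by
  classical
  constructor
  · -- forward direction
    intro hX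
    have hexL : ∀ σ : List A, ∃ T, ULarge U (sect X σ) →
        (IsUTree U T ∧ branches T ⊆ sect X σ) := by
      intro σ
      by_cases h : ULarge U (sect X σ)
      · obtain ⟨T, hT⟩ := h; exact ⟨T, fun _ => hT⟩
      · exact ⟨∅, fun hc => absurd hc h⟩
    choose TL hTL using hexL
    have hexS : ∀ σ : List A, ∃ T, USmall U (sect X σ) →
        (IsUTree U T ∧ branches T ∩ sect X σ = ∅) := by
      intro σ
      by_cases h : USmall U (sect X σ)
      · obtain ⟨T, hT⟩ := h; exact ⟨T, fun _ => hT⟩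
      · exact ⟨∅, fun hc => absurd hc h⟩
    choose TS hTS using hexS
    set Fk : ℕ → Set (ℕ → A) := fun k =>
      {s | seg s k ∈ {σ | ULarge U (sect X σ)} ∧ shift k s ∈ branches (TL (seg s k))}
      with hFk
    set Gk : ℕ → Set (ℕ → A) := fun k =>
      {s | seg s k ∈ {σ | USmall U (sect X σ)} ∧ shift k s ∈ branches (TS (seg s k))}
      with hGk
    have hFcl : ∀ k, IsClosed (Fk k) := by
      intro k
      show IsClosed {s : ℕ → A | seg s k ∈ {σ | ULarge U (sect X σ)} ∧
        shift k s ∈ branches (TL (seg s k))}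
      rw [F_eq_branches]; exact isClosed_branches _
    have hGcl : ∀ k, IsClosed (Gk k) := by
      intro k
      show IsClosed {s : ℕ → A | seg s k ∈ {σ | USmall U (sect X σ)} ∧
        shift k s ∈ branches (TS (seg s k))}
      rw [F_eq_branches]; exact isClosed_branches _
    refine ⟨⋃ k, Fk k, (⋃ k, Gk k)ᶜ, ?_, ?_, ⟨Fk, hFcl, rfl⟩, ?_, ?_⟩
    · -- Z ⊆ X
      intro s hs
      obtain ⟨k, hk⟩ := Set.mem_iUnion.mp hs
      have := (hTL _ hk.1).2 hk.2
      rwa [sect, Set.mem_setOf_eq, app_seg_shift] at this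
    · -- X ⊆ Y
      intro s hs
      simp only [Set.mem_compl_iff, Set.mem_iUnion, not_exists]
      intro k hk
      have hdis := (hTS _ hk.1).2
      rw [Set.eq_empty_iff_forall_notMem] at hdis
      refine hdis (shift k s) ⟨hk.2, ?_⟩
      rw [sect, Set.mem_setOf_eq, app_seg_shift]
      exact hs
    · -- Gδ
      rw [Set.compl_iUnion]
      exact IsGδ.iInter_of_isOpen fun k => (hGcl k).isOpen_compl
    · -- null difference
      intro σ
      rcases hX σ with hL | hS
      · refine ⟨TL σ, (hTL σ hL).1, ?_⟩
        rw [Set.eq_empty_iff_forall_notMem]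
        rintro s ⟨hsT, hsY⟩
        have hmem : app σ s ∈ ⋃ k, Fk k := by
          refine Set.mem_iUnion.mpr ⟨σ.length, ?_⟩
          rw [hFk]
          refine ⟨?_, ?_⟩
          · rw [Set.mem_setOf_eq, seg_app_len]; exact hL
          · rw [seg_app_len, shift_app]; exact hsT
        have hsY' : app σ s ∈ ((⋃ k, Gk k)ᶜ) ∧ app σ s ∉ ⋃ k, Fk k := hsY
        exact hsY'.2 hmem
      · refine ⟨TS σ, (hTS σ hS).1, ?_⟩
        rw [Set.eq_empty_iff_forall_notMem]
        rintro s ⟨hsT, hsY⟩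
        have hmem : app σ s ∈ ⋃ k, Gk k := by
          refine Set.mem_iUnion.mpr ⟨σ.length, ?_⟩
          rw [hGk]
          refine ⟨?_, ?_⟩
          · rw [Set.mem_setOf_eq, seg_app_len]; exact hS
          · rw [seg_app_len, shift_app]; exact hsT
        have hsY' : app σ s ∈ ((⋃ k, Gk k)ᶜ) ∧ app σ s ∉ ⋃ k, Fk k := hsY
        exact hsY'.1 hmem
  · -- backward direction
    rintro ⟨Z, Y, hZX, hXY, ⟨F, hFcl, hZeq⟩, hYGδ, hnull⟩
    obtain ⟨g, hgopen, hYeq⟩ := isGδ_iff_eq_iInter_nat.mp hYGδ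
    intro σ
    obtain ⟨T0, hT0, hT0dis⟩ := hnull σ
    set C : ℕ → Set (ℕ → A) := fun n => (sect (g n) σ)ᶜ with hC
    have hCcl : ∀ n, IsClosed (C n) := fun n => (sect_isOpen (hgopen n) σ).isClosed_compl
    obtain ⟨T', h1, h2, h3⟩ := fsigma_det hT0 C hCcl
    have hCun : (⋃ n, C n) = (sect Y σ)ᶜ := by
      rw [hC, ← Set.compl_iInter]
      congr 1
      rw [hYeq]
      ext s
      simp [sect]
    rcases h3 with h3 | h3
    · right
      refine ⟨T', h1, ?_⟩
      rw [Set.eq_empty_iff_forall_notMem]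
      rintro s ⟨hsT, hsX⟩
      have := h3 hsT
      rw [hCun] at this
      exact this (hXY hsX)
    · left
      refine ⟨T', h1, ?_⟩
      intro s hs
      rw [Set.eq_empty_iff_forall_notMem] at h3
      have hsY : s ∈ sect Y σ := by
        by_contra hc
        exact h3 s ⟨hs, by rw [hCun]; exact hc⟩
      have hsT0 : s ∈ branches T0 := branches_mono h2 hs
      rw [Set.eq_empty_iff_forall_notMem] at hT0dis
      have hnot : s ∉ sect (Y \ Z) σ := fun hc => hT0dis s ⟨hsT0, hc⟩
      show app σ s ∈ X
      apply hZX
      by_contra hzc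
      exact hnot ⟨hsY, hzc⟩

end Main

end UMeas

theorem stmt7 {A : Type u} [TopologicalSpace A] [DiscreteTopology A]
    (U : Ultrafilter A) (X : Set (ℕ → A)) :
    UMeas.UMeasurable U X ↔
      ∃ Z Y : Set (ℕ → A), Z ⊆ X ∧ X ⊆ Y ∧
        (∃ F : ℕ → Set (ℕ → A), (∀ n, IsClosed (F n)) ∧ Z = ⋃ n, F n) ∧
        IsGδ Y ∧ UMeas.UNull U (Y \ Z) := UMeas.main_iff U X
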